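/- The operator T_1 defined by (T_1 f)(z) = ((t_1+u_1+z)(t_1-u_1+z)/(2z))·(f(-z) - f(z)) + t_1·f(z) satisfies T_1² = t_1²·𝟙 on functions f : ℂ → ℂ (away from z = 0). -/

import Mathlib

/-- The operator `T₁` of the degenerate double affine Hecke algebra of type
`(C₁∨, C₁)`. -/
noncomputable def T1op (t1 u1 : ℂ) (f : ℂ → ℂ) : ℂ → ℂ :=
  fun z => (t1 + u1 + z) * (t1 - u1 + z) / (2 * z) * (f (-z) - f z) + t1 * f z

/-- `T₁² = t₁² 𝟙` away from `z = 0`. -/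
theorem T1_sq (t1 u1 : ℂ) (f : ℂ → ℂ) (z : ℂ) (hz : z ≠ 0) :
    T1op t1 u1 (T1op t1 u1 f) z = t1 ^ 2 * f z := by
  simp only [T1op, neg_neg]
  field_simp
  ring_nf
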